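/- Let J_1, …, J_u be intervals over {1,…,n} such that min(J_j) ≤ min(J_{j+1}) and max(J_j) ≤ max(J_{j+1}) for all j ∈ {1,…,u−1}. Let A = {J_j : j even} and B = {J_j : j odd} be the families of even-indexed and odd-indexed intervals. Then for every point i ∈ {1,…,n}, the coverages satisfy |c_A(i) − c_B(i)| ≤ 1. -/

import Mathlib

lemma count_odd (m : ℕ) : (((Finset.range m).filter fun j => j % 2 = 1)).card = m / 2 := by
  induction m with
  | zero => simp
  | succ m ih =>
    rw [Finset.range_add_one, Finset.filter_insert]
    by_cases h : m % 2 = 1 <;> simp [h, Finset.card_insert_of_notMem, ih] <;> omega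

lemma count_even (m : ℕ) : (((Finset.range m).filter fun j => j % 2 = 0)).card = (m + 1) / 2 := by
  induction m with
  | zero => simp
  | succ m ih =>
    rw [Finset.range_add_one, Finset.filter_insert]
    by_cases h : m % 2 = 0 <;> simp [h, Finset.card_insert_of_notMem, ih] <;> omega

lemma icc_count (a b : ℕ) (hab : a ≤ b) (p : ℕ → Prop) [DecidablePred p] :
    (((Finset.Icc a b).filter p)).card + (((Finset.range a).filter p)).card
      = (((Finset.range (b+1)).filter p)).card := by
  have h : Finset.range (b+1) = Finset.range a ∪ Finset.Icc a b := by
    rw [Finset.range_eq_Ico, ← Finset.Ico_add_one_right_eq_Icc, Finset.range_eq_Ico,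
      Finset.Ico_union_Ico_eq_Ico (Nat.zero_le a) (by omega)]
  rw [h, Finset.filter_union, Finset.card_union_of_disjoint]
  · omega
  · exact Finset.disjoint_filter_filter (by
      simp [Finset.disjoint_left, Finset.mem_Icc]
      omega)

lemma contiguous_eq_Icc (S : Finset ℕ) (hS : S.Nonempty)
    (hc : ∀ a k c, a ∈ S → c ∈ S → a ≤ k → k ≤ c → k ∈ S) :
    S = Finset.Icc (S.min' hS) (S.max' hS) := by
  apply Finset.Subset.antisymm
  · intro x hx
    simp [Finset.mem_Icc, Finset.min'_le _ _ hx, Finset.le_max' _ _ hx]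
  · intro x hx
    simp only [Finset.mem_Icc] at hx
    exact hc _ x _ (S.min'_mem hS) (S.max'_mem hS) hx.1 hx.2

lemma key (S : Finset ℕ)
    (hc : ∀ a k c, a ∈ S → c ∈ S → a ≤ k → k ≤ c → k ∈ S) :
    |((S.filter fun j => j % 2 = 1).card : ℤ) - ((S.filter fun j => j % 2 = 0).card : ℤ)| ≤ 1 := by
  rcases S.eq_empty_or_nonempty with rfl | hS
  · simp
  · set a := S.min' hS with ha
    set b := S.max' hS with hb
    have hab : a ≤ b := S.min'_le _ (S.max'_mem hS)
    have hSI := contiguous_eq_Icc S hS hc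
    rw [hSI, ← ha, ← hb]
    have h1 := icc_count a b hab (fun j => j % 2 = 1)
    have h2 := icc_count a b hab (fun j => j % 2 = 0)
    rw [count_odd, count_odd] at h1
    rw [count_even, count_even] at h2
    rw [abs_le]
    constructor <;> omega

/-- The coverage of a point `i` by a family `X` of intervals (pairs `(l, r)` identified
with `{l,…,r}`): the number of intervals in `X`, with multiplicity, containing `i`. -/
def coverage (X : Multiset (ℕ × ℕ)) (i : ℕ) : ℕ :=
  (X.filter fun p => p.1 ≤ i ∧ i ≤ p.2).card

/-- Let `J_1, …, J_u` be intervals over `{1,…,n}` (here `J : Fin u → ℕ × ℕ`,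
with `J ⟨j-1,_⟩` playing the role of the 1-based `J_j`) whose left and right endpoints
are non-decreasing along consecutive indices.  Let `A` be the family of even-indexed
intervals (1-based, i.e. 0-based odd positions) and `B` the family of odd-indexed ones.
Then for every point `i ∈ {1,…,n}`, `|c_A(i) − c_B(i)| ≤ 1`. -/
theorem stmt_5 (n u : ℕ) (J : Fin u → ℕ × ℕ)
    (hJ : ∀ j, 1 ≤ (J j).1 ∧ (J j).1 ≤ (J j).2 ∧ (J j).2 ≤ n)
    (hmono : ∀ (j : ℕ) (h : j + 1 < u),
      (J ⟨j, by omega⟩).1 ≤ (J ⟨j + 1, h⟩).1 ∧ (J ⟨j, by omega⟩).2 ≤ (J ⟨j + 1, h⟩).2)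
    (A B : Multiset (ℕ × ℕ))
    (hA : A = Multiset.map J (Finset.univ.filter fun j : Fin u => (j : ℕ) % 2 = 1).val)
    (hB : B = Multiset.map J (Finset.univ.filter fun j : Fin u => (j : ℕ) % 2 = 0).val) :
    ∀ i ∈ Finset.Icc 1 n, |(coverage A i : ℤ) - (coverage B i : ℤ)| ≤ 1 := by
  classical
  intro i _
  -- monotonicity over arbitrary index gaps
  have mono : ∀ (j k : ℕ) (hjk : j ≤ k) (hk : k < u),
      (J ⟨j, by omega⟩).1 ≤ (J ⟨k, hk⟩).1 ∧ (J ⟨j, by omega⟩).2 ≤ (J ⟨k, hk⟩).2 := by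
    intro j k hjk
    induction k with
    | zero =>
      intro hk
      have : j = 0 := by omega
      subst this; exact ⟨le_refl _, le_refl _⟩
    | succ k ih =>
      intro hk
      rcases Nat.lt_or_ge j (k+1) with h | h
      · have hj : j ≤ k := by omega
        have h1 := ih hj (by omega)
        have h2 := hmono k hk
        exact ⟨le_trans h1.1 h2.1, le_trans h1.2 h2.2⟩
      · have : j = k + 1 := by omega
        subst this; exact ⟨le_refl _, le_refl _⟩
  set P : ℕ → Prop := fun j => ∃ h : j < u, (J ⟨j, h⟩).1 ≤ i ∧ i ≤ (J ⟨j, h⟩).2 with hP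
  set S : Finset ℕ := (Finset.range u).filter P with hSdef
  have hcont : ∀ a k c, a ∈ S → c ∈ S → a ≤ k → k ≤ c → k ∈ S := by
    intro a k c haS hcS hak hkc
    simp only [hSdef, Finset.mem_filter, Finset.mem_range] at haS hcS ⊢
    obtain ⟨hau, ha, hl, hr⟩ := haS
    obtain ⟨hcu, hc, hl', hr'⟩ := hcS
    have hku : k < u := by omega
    refine ⟨hku, hku, ?_, ?_⟩
    · exact le_trans (mono k c hkc hc).1 hl'
    · exact le_trans hr (mono a k hak hku).2
  -- coverage in terms of counting indices
  have cov : ∀ (r : ℕ) (X : Multiset (ℕ × ℕ)),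
      X = Multiset.map J (Finset.univ.filter fun j : Fin u => (j : ℕ) % 2 = r).val →
      coverage X i = ((S.filter fun j => j % 2 = r)).card := by
    intro r X hX
    rw [coverage, hX, Multiset.filter_map]
    rw [Multiset.card_map, ← Finset.filter_val, ← Finset.card_def, Finset.filter_filter]
    rw [hSdef, Finset.filter_filter]
    apply Finset.card_bij (fun (a : Fin u) _ => (a : ℕ))
    · intro a ha
      simp only [Finset.mem_filter, Finset.mem_univ, true_and, Function.comp] at ha
      simp only [Finset.mem_filter, Finset.mem_range]
      exact ⟨a.isLt, ⟨a.isLt, ha.2⟩, ha.1⟩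
    · intro a _ b _ h
      exact Fin.val_injective h
    · intro b hb
      simp only [Finset.mem_filter, Finset.mem_range, hP] at hb
      obtain ⟨hbu, ⟨hbu', hl, hr⟩, hbmod⟩ := hb
      exact ⟨⟨b, hbu⟩, Finset.mem_filter.mpr ⟨Finset.mem_univ _, hbmod, hl, hr⟩, rfl⟩
  rw [cov 1 A hA, cov 0 B hB]
  exact key S hcont
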